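/- Every injective entire function is complex affine: if f : ℂ → ℂ is holomorphic on all of ℂ and injective, then there exist a, b ∈ ℂ with a ≠ 0 such that f(z) = a·z + b for all z ∈ ℂ. -/

import Mathlib

open Metric Set Filter Function Complex Topology Bornology

lemma countable_zeros {F : ℂ → ℂ} (hF : Differentiable ℂ F) (hne : ∃ z, F z ≠ 0) :
    {z : ℂ | F z = 0}.Countable := by
  have han : AnalyticOnNhd ℂ F univ :=
    hF.differentiableOn.analyticOnNhd isOpen_univ
  have hiso : ∀ z : ℂ, F z = 0 → ∀ᶠ w in 𝓝[≠] z, F w ≠ 0 := by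
    intro z hz
    rcases (han z trivial).eventually_eq_zero_or_eventually_ne_zero with h | h
    · exfalso
      obtain ⟨w, hw⟩ := hne
      have : F w = 0 := by
        have := han.eqOn_zero_of_preconnected_of_eventuallyEq_zero
          (isPreconnected_univ) (trivial : z ∈ univ) h
        exact this trivial
      exact hw this
    · exact h
  set S := {z : ℂ | F z = 0}
  have hclosed : IsClosed S := isClosed_eq hF.continuous continuous_const
  have : S = ⋃ n : ℕ, S ∩ closedBall 0 n := by
    ext z; simp only [mem_iUnion, mem_inter_iff, mem_closedBall, dist_zero_right]
    constructor
    · intro h; exact ⟨⌈‖z‖⌉₊, h, Nat.le_ceil _⟩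
    · rintro ⟨n, h, _⟩; exact h
  rw [this]
  refine Set.countable_iUnion fun n => Set.Finite.countable ?_
  have hcpt : IsCompact (S ∩ closedBall 0 n) :=
    (isCompact_closedBall 0 n).inter_left hclosed
  refine hcpt.finite ?_
  rw [isDiscrete_iff_discreteTopology, discreteTopology_subtype_iff]
  intro z hz
  rw [inf_principal_eq_bot]
  filter_upwards [hiso z hz.1] with w hw
  intro hwmem; exact hw hwmem.1

lemma deriv_entire {g : ℂ → ℂ} (hg : Differentiable ℂ g) : Differentiable ℂ (deriv g) := by
  have h1 : Differentiable ℂ (fun z => fderiv ℂ g z 1) := by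
    refine Differentiable.clm_apply (fun z => ?_) (differentiable_const _)
    exact ((hg.differentiableOn.analyticOnNhd isOpen_univ) z trivial).fderiv.differentiableAt
  have : (fun z => fderiv ℂ g z 1) = deriv g := funext fun z => fderiv_apply_one_eq_deriv
  rwa [this] at h1

lemma affine_of_linear_growth {g : ℂ → ℂ} (hg : Differentiable ℂ g) {C D : ℝ}
    (hC : 0 ≤ C) (hgrow : ∀ z : ℂ, ‖g z‖ ≤ C * ‖z‖ + D) :
    ∃ a b : ℂ, ∀ z : ℂ, g z = a * z + b := by
  have hb : ∀ z : ℂ, ‖deriv g z‖ ≤ C := by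
    intro z
    have hev : ∀ᶠ R : ℝ in atTop, ‖deriv g z‖ ≤ C + (C * ‖z‖ + D) / R := by
      filter_upwards [eventually_gt_atTop (0 : ℝ)] with R hR
      have key := Complex.norm_deriv_le_of_forall_mem_sphere_norm_le hR hg.diffContOnCl
        (C := C * (‖z‖ + R) + D) (fun w hw => by
          refine (hgrow w).trans ?_
          have hwz : dist w z = R := mem_sphere.mp hw
          have : ‖w‖ ≤ ‖z‖ + R := by
            calc ‖w‖ = ‖z + (w - z)‖ := by ring_nf
              _ ≤ ‖z‖ + ‖w - z‖ := norm_add_le _ _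
              _ = ‖z‖ + R := by rw [← dist_eq_norm, hwz]
          nlinarith [norm_nonneg w, norm_nonneg z])
      refine key.trans (le_of_eq ?_)
      field_simp
      ring
    have hlim : Tendsto (fun R : ℝ => C + (C * ‖z‖ + D) / R) atTop (𝓝 (C + 0)) :=
      tendsto_const_nhds.add (tendsto_const_nhds.div_atTop tendsto_id)
    rw [add_zero] at hlim
    exact ge_of_tendsto hlim hev
  have hdg : Differentiable ℂ (deriv g) := deriv_entire hg
  obtain ⟨a, ha⟩ := hdg.exists_const_forall_eq_of_bounded
    (isBounded_iff_forall_norm_le.mpr ⟨C, by rintro x ⟨z, rfl⟩; exact hb z⟩)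
  refine ⟨a, g 0, fun z => ?_⟩
  have hφ : ∀ w : ℂ, HasDerivAt (fun z => g z - a * z) 0 w := by
    intro w
    have h1 : HasDerivAt g a w := by
      have := (hg w).hasDerivAt
      rwa [ha w] at this
    exact (h1.sub ((hasDerivAt_id w).const_mul a)).congr_deriv (by simp)
  have hconst := is_const_of_deriv_eq_zero (fun w => (hφ w).differentiableAt)
    (fun w => (hφ w).deriv) z 0
  simp only [mul_zero, sub_zero] at hconst
  linear_combination hconst

/-- Every injective entire function is complex affine: `f(z) = a·z + b` with `a ≠ 0`. -/
theorem injective_entire_is_affine (f : ℂ → ℂ)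
    (hf : ∀ z : ℂ, DifferentiableAt ℂ f z) (hinj : Function.Injective f) :
    ∃ a b : ℂ, a ≠ 0 ∧ ∀ z : ℂ, f z = a * z + b := by
  have hdf : Differentiable ℂ f := fun z => hf z
  have han : AnalyticOnNhd ℂ f univ := hdf.differentiableOn.analyticOnNhd isOpen_univ
  -- Step 1: open mapping theorem and injectivity give a lower bound outside the unit ball
  have hopen : ∀ s : Set ℂ, IsOpen s → IsOpen (f '' s) := by
    rcases han.is_constant_or_isOpen isPreconnected_univ with ⟨c, hc⟩ | h
    · exfalso
      have : (0 : ℂ) = 1 := hinj (by rw [hc 0 trivial, hc 1 trivial])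
      norm_num at this
    · exact fun s hs => h s (subset_univ s) hs
  set w := f 0 with hw
  obtain ⟨r, hr, hball⟩ : ∃ r > 0, ball w r ⊆ f '' ball 0 1 :=
    Metric.isOpen_iff.mp (hopen _ isOpen_ball) w ⟨0, by simp, rfl⟩
  have hout : ∀ z : ℂ, 1 ≤ ‖z‖ → r ≤ ‖f z - w‖ := by
    intro z hz
    by_contra hlt; push_neg at hlt
    have : f z ∈ ball w r := by simpa [mem_ball, dist_eq_norm] using hlt
    obtain ⟨z', hz', hfz⟩ := hball this
    have hzz : z' = z := hinj hfz
    rw [hzz] at hz'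
    simp only [mem_ball, dist_zero_right] at hz'
    linarith
  -- Step 2: removable singularity at infinity
  set h : ℂ → ℂ := fun z => (f z⁻¹ - w)⁻¹ with hh
  have hne : ∀ z : ℂ, z ∈ ball (0:ℂ) 1 \ {0} → f z⁻¹ - w ≠ 0 := by
    intro z hz
    have hz0 : z ≠ 0 := hz.2
    have hz1 : ‖z‖ < 1 := by simpa [mem_ball, dist_zero_right] using hz.1
    have : 1 ≤ ‖z⁻¹‖ := by
      rw [norm_inv]
      exact (one_le_inv₀ (norm_pos_iff.mpr hz0)).mpr hz1.le
    have := hout z⁻¹ this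
    intro hcon; rw [hcon] at this; simp at this; linarith
  have hhd : DifferentiableOn ℂ h (ball 0 1 \ {0}) := by
    intro z hz
    have hz0 : z ≠ 0 := hz.2
    exact (((hdf.differentiableAt.comp z (differentiableAt_inv hz0)).sub
      (differentiableAt_const w)).inv (hne z hz)).differentiableWithinAt
  have hbdd : BddAbove (norm ∘ h '' (ball 0 1 \ {0})) := by
    refine ⟨r⁻¹, ?_⟩
    rintro x ⟨z, hz, rfl⟩
    have hz0 : z ≠ 0 := hz.2
    have hz1 : ‖z‖ < 1 := by simpa [mem_ball, dist_zero_right] using hz.1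
    have h1 : 1 ≤ ‖z⁻¹‖ := by
      rw [norm_inv]
      exact (one_le_inv₀ (norm_pos_iff.mpr hz0)).mpr hz1.le
    simp only [comp_apply, hh, norm_inv]
    exact inv_anti₀ hr (hout z⁻¹ h1)
  have hG := Complex.differentiableOn_update_limUnder_of_bddAbove
    (ball_mem_nhds (0:ℂ) one_pos) hhd hbdd
  set G : ℂ → ℂ := update h 0 (limUnder (𝓝[≠] 0) h) with hGdef
  have hGh : ∀ z : ℂ, z ≠ 0 → G z = h z := fun z hz => update_of_ne hz _ _
  have hGtend : Tendsto h (𝓝[≠] 0) (𝓝 (G 0)) := by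
    have hcont : ContinuousAt G 0 :=
      (hG.differentiableAt (ball_mem_nhds (0:ℂ) one_pos)).continuousAt
    have : Tendsto G (𝓝[≠] 0) (𝓝 (G 0)) := hcont.continuousWithinAt.tendsto
    refine this.congr' ?_
    filter_upwards [self_mem_nhdsWithin] with z hz
    exact hGh z hz
  by_cases hc : G 0 = 0
  · -- Case: G 0 = 0, f has at least linear growth at infinity
    -- linear bound on G near 0
    have hO : (fun z => G z - G 0) =O[𝓝 0] (fun z => z - 0) :=
      (hG.differentiableAt (ball_mem_nhds (0:ℂ) one_pos)).isBigO_sub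
    rw [hc] at hO
    simp only [sub_zero] at hO
    obtain ⟨c, hcb⟩ := hO.bound
    set K : ℝ := max c 1 with hKdef
    have hK1 : 1 ≤ K := le_max_right _ _
    have hK0 : 0 < K := lt_of_lt_of_le one_pos hK1
    have hKev : ∀ᶠ z : ℂ in 𝓝 0, ‖G z‖ ≤ K * ‖z‖ := by
      filter_upwards [hcb] with z hz
      exact hz.trans (by nlinarith [norm_nonneg z, le_max_left c 1])
    obtain ⟨ε, hε, hKb⟩ := Metric.eventually_nhds_iff.mp hKev
    set R : ℝ := max 1 (2 / ε) with hRdef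
    have hR1 : 1 ≤ R := le_max_left _ _
    -- lower growth bound for f
    have hlow : ∀ ξ : ℂ, R ≤ ‖ξ‖ → ‖ξ‖ ≤ K * ‖f ξ - w‖ := by
      intro ξ hξ
      have hξ1 : 1 ≤ ‖ξ‖ := le_trans hR1 hξ
      have hξ0 : ξ ≠ 0 := by
        intro h0; rw [h0] at hξ1; simp at hξ1; linarith
      have hξpos : 0 < ‖ξ‖ := lt_of_lt_of_le one_pos hξ1
      have hsmall : dist ξ⁻¹ 0 < ε := by
        rw [dist_zero_right, norm_inv]
        have h2ε : 2 / ε ≤ ‖ξ‖ := le_trans (le_max_right _ _) hξ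
        rw [inv_lt_comm₀ hξpos hε]
        calc ε⁻¹ < 2 / ε := by rw [div_eq_mul_inv]; nlinarith [inv_pos.mpr hε]
          _ ≤ ‖ξ‖ := h2ε
      have hGb := hKb hsmall
      have hfw : f ξ - w ≠ 0 := by
        intro hcon
        have := hout ξ hξ1
        rw [hcon] at this; simp at this; linarith
      have hGval : G ξ⁻¹ = (f ξ - w)⁻¹ := by
        rw [hGh ξ⁻¹ (inv_ne_zero hξ0)]
        simp only [hh, inv_inv]
      rw [hGval, norm_inv, norm_inv] at hGb
      -- hGb : ‖f ξ - w‖⁻¹ ≤ K * ‖ξ‖⁻¹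
      have hapos : 0 < ‖f ξ - w‖ := norm_pos_iff.mpr hfw
      have h2 : ‖ξ‖ * ‖f ξ - w‖⁻¹ ≤ K := by
        calc ‖ξ‖ * ‖f ξ - w‖⁻¹ ≤ ‖ξ‖ * (K * ‖ξ‖⁻¹) :=
              mul_le_mul_of_nonneg_left hGb hξpos.le
          _ = K := by
              have he : ‖ξ‖ * (K * ‖ξ‖⁻¹) = K * (‖ξ‖ * ‖ξ‖⁻¹) := by ring
              rw [he, mul_inv_cancel₀ hξpos.ne', mul_one]
      calc ‖ξ‖ = ‖ξ‖ * ‖f ξ - w‖⁻¹ * ‖f ξ - w‖ := by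
            rw [mul_assoc, inv_mul_cancel₀ hapos.ne', mul_one]
        _ ≤ K * ‖f ξ - w‖ := mul_le_mul_of_nonneg_right h2 hapos.le
    -- f is proper
    have hprop : Tendsto f (cobounded ℂ) (cobounded ℂ) := by
      rw [← tendsto_norm_atTop_iff_cobounded]
      refine tendsto_atTop_mono' (cobounded ℂ)
        (f₁ := fun ξ : ℂ => ‖ξ‖ / K - ‖w‖) ?_ ?_
      · filter_upwards [tendsto_norm_cobounded_atTop.eventually_ge_atTop R] with ξ hξ
        have h1 := hlow ξ hξ
        have h2 : ‖f ξ - w‖ ≤ ‖f ξ‖ + ‖w‖ := norm_sub_le _ _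
        have h3 : ‖ξ‖ / K ≤ ‖f ξ‖ + ‖w‖ := by
          rw [div_le_iff₀ hK0]; nlinarith
        linarith
      · exact (tendsto_norm_cobounded_atTop.atTop_div_const hK0).atTop_add tendsto_const_nhds
    -- f is surjective
    have hrange : range f = univ := by
      have hop : IsOpen (range f) := by
        rw [← image_univ]; exact hopen _ isOpen_univ
      have hcl : IsClosed (range f) := by
        have hpm : IsProperMap f := isProperMap_iff_tendsto_cocompact.mpr
          ⟨hdf.continuous, by rwa [cobounded_eq_cocompact] at hprop⟩
        exact hpm.isClosedMap.isClosed_range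
      exact IsClopen.eq_univ ⟨hcl, hop⟩ ⟨f 0, mem_range_self 0⟩
    have hsurj : Surjective f := range_eq_univ.mp hrange
    -- the inverse function
    set g : ℂ → ℂ := Function.invFun f with hgdef
    have hgf : LeftInverse g f := leftInverse_invFun hinj
    have hfg : Function.RightInverse g f := rightInverse_invFun hsurj
    have hgcont : Continuous g := by
      rw [continuous_def]
      intro U hU
      have : g ⁻¹' U = f '' U := by
        ext η
        simp only [mem_preimage, mem_image]
        constructor
        · intro hgη; exact ⟨g η, hgη, hfg η⟩
        · rintro ⟨x, hx, rfl⟩; rwa [hgf x]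
      rw [this]; exact hopen U hU
    -- countable set of critical values
    have hne0 : ∃ z, deriv f z ≠ 0 := by
      by_contra hall; push_neg at hall
      have h01 : f 0 = f 1 := is_const_of_deriv_eq_zero hdf hall 0 1
      have : (0 : ℂ) = 1 := hinj h01
      norm_num at this
    have hTcount : (f '' {z | deriv f z = 0}).Countable :=
      (countable_zeros (deriv_entire hdf) hne0).image f
    -- g is differentiable away from critical values
    have hgdiff : ∀ η : ℂ, η ∉ f '' {z | deriv f z = 0} → DifferentiableAt ℂ g η := by
      intro η hη
      have hd0 : deriv f (g η) ≠ 0 := by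
        intro h0
        exact hη ⟨g η, h0, hfg η⟩
      exact (HasDerivAt.of_local_left_inverse hgcont.continuousAt
        (hdf (g η)).hasDerivAt hd0
        (Filter.Eventually.of_forall (fun y => hfg y))).differentiableAt
    -- g is entire
    have hgent : Differentiable ℂ g := by
      intro p
      have hb := Complex.hasFPowerSeriesOnBall_of_differentiable_off_countable
        (R := 1) (c := p) hTcount (hgcont.continuousOn)
        (fun z hz => hgdiff z hz.2) one_pos
      exact hb.analyticAt.differentiableAt
    -- linear growth of g
    have hggrow : ∀ η : ℂ, ‖g η‖ ≤ K * ‖η‖ + (K * ‖w‖ + R) := by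
      intro η
      rcases le_or_gt (‖g η‖) R with hcase | hcase
      · have h1 : 0 ≤ K * ‖η‖ := mul_nonneg hK0.le (norm_nonneg _)
        have h2 : 0 ≤ K * ‖w‖ := mul_nonneg hK0.le (norm_nonneg _)
        linarith
      · have h1 := hlow (g η) hcase.le
        rw [hfg η] at h1
        have h2 : ‖η - w‖ ≤ ‖η‖ + ‖w‖ := norm_sub_le _ _
        nlinarith
    obtain ⟨a', b', hab⟩ := affine_of_linear_growth hgent hK0.le hggrow
    have ha' : a' ≠ 0 := by
      intro h0
      have h01 : g (f 0) = g (f 1) := by rw [hab, hab, h0]; ring_nf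
      rw [hgf 0, hgf 1] at h01
      norm_num at h01
    refine ⟨a'⁻¹, -b' * a'⁻¹, inv_ne_zero ha', fun z => ?_⟩
    have h1 : a' * f z + b' = z := by rw [← hab (f z), hgf z]
    field_simp
    linear_combination h1
  · -- Case: G 0 ≠ 0, f is bounded, contradiction with Liouville
    exfalso
    have h1 : Tendsto (fun ξ : ℂ => ξ⁻¹) (cobounded ℂ) (𝓝[≠] 0) := tendsto_inv₀_cobounded'
    have h2 : Tendsto (fun ξ : ℂ => h ξ⁻¹) (cobounded ℂ) (𝓝 (G 0)) := hGtend.comp h1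
    have h3 : Tendsto f (cobounded ℂ) (𝓝 (w + (G 0)⁻¹)) := by
      have h4 : Tendsto (fun ξ : ℂ => w + (h ξ⁻¹)⁻¹) (cobounded ℂ) (𝓝 (w + (G 0)⁻¹)) :=
        tendsto_const_nhds.add (h2.inv₀ hc)
      refine h4.congr' ?_
      filter_upwards [tendsto_norm_cobounded_atTop.eventually_ge_atTop 1] with ξ hξ
      have hξ0 : ξ ≠ 0 := by
        intro h0; rw [h0] at hξ; simp at hξ; linarith
      have hfw : f ξ - w ≠ 0 := by
        intro hcon
        have := hout ξ hξ
        rw [hcon] at this; simp at this; linarith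
      show w + (h ξ⁻¹)⁻¹ = f ξ
      simp only [hh, inv_inv]
      ring
    have h5 : f = Function.const ℂ (w + (G 0)⁻¹) :=
      hdf.eq_const_of_tendsto_cocompact (by rwa [cobounded_eq_cocompact] at h3)
    have : (0 : ℂ) = 1 := hinj (by rw [h5]; rfl)
    norm_num at this
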